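/- Let R ≥ 1, let w ∈ ℝ^d satisfy ‖w‖_∞ ≤ R, let w* ∈ {−1,1}^d, and let x₁, …, x_k be one-hot vectors in ℝ^d. With g = (∏_{t=1}^k ⟨w, x_t⟩ − ∏_{t=1}^k ⟨w*, x_t⟩) · Σ_{t=1}^k (∏_{s≠t} ⟨w, x_s⟩) x_t, it holds that ‖g‖₂² ≤ k²·R^{2k−2}·(∏_{t=1}^k ⟨w, x_t⟩ − ∏_{t=1}^k ⟨w*, x_t⟩)². Consequently, when x₁,…,x_k are i.i.d. one-hot inputs with P[x_t = e_j] = p_j for a probability vector p, E‖g‖₂² ≤ 2·k²·R^{2k−2}·L(w), where L(w) = (1/2)·E[(∏_t ⟨w,x_t⟩ − ∏_t ⟨w*,x_t⟩)²]. -/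

import Mathlib

open MeasureTheory ProbabilityTheory

/-- Second-moment bound for the stochastic gradient: if `‖w‖_∞ ≤ R` with `R ≥ 1` and
`w* ∈ {−1,1}^d`, then for any one-hot inputs `x₁,…,x_k` the per-sample gradient `g`
satisfies `‖g‖₂² ≤ k² R^{2k−2} (∏ₜ⟨w,xₜ⟩ − ∏ₜ⟨w*,xₜ⟩)²`; consequently, when the inputs
are i.i.d. one-hot with `P[xₜ = e_j] = p_j`, `E‖g‖₂² ≤ 2 k² R^{2k−2} L(w)` where
`L(w) = (1/2) E[(∏ₜ⟨w,xₜ⟩ − ∏ₜ⟨w*,xₜ⟩)²]`. -/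
theorem stochastic_gradient_second_moment (d k : ℕ) (hd : 0 < d) (hk : 0 < k)
    (R : ℝ) (hR : 1 ≤ R)
    (w wstar : Fin d → ℝ) (hw : ∀ j, |w j| ≤ R) (hws : ∀ j, wstar j = 1 ∨ wstar j = -1) :
    (∀ x : Fin k → Fin d → ℝ, (∀ t, ∃ j, x t = Pi.single j 1) →
      (∑ j, (((∏ t, ∑ m, w m * x t m) - (∏ t, ∑ m, wstar m * x t m)) *
          ∑ t, (∏ s ∈ Finset.univ.erase t, ∑ m, w m * x s m) * x t j) ^ 2)
        ≤ (k : ℝ) ^ 2 * R ^ (2 * k - 2) *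
            ((∏ t, ∑ m, w m * x t m) - (∏ t, ∑ m, wstar m * x t m)) ^ 2) ∧
    (∀ (p : Fin d → ℝ), (∀ j, 0 ≤ p j) → (∑ j, p j = 1) →
      ∀ (Ω : Type) (_ : MeasurableSpace Ω) (μ : Measure Ω), IsProbabilityMeasure μ →
      ∀ (x : Fin k → Ω → (Fin d → ℝ)), (∀ t, Measurable (x t)) →
        iIndepFun x μ →
        (∀ t j, μ {ω | x t ω = Pi.single j 1} = ENNReal.ofReal (p j)) →
        (∫ ω, ∑ j, (((∏ t, ∑ m, w m * x t ω m) - (∏ t, ∑ m, wstar m * x t ω m)) *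
            ∑ t, (∏ s ∈ Finset.univ.erase t, ∑ m, w m * x s ω m) * x t ω j) ^ 2 ∂μ)
          ≤ 2 * (k : ℝ) ^ 2 * R ^ (2 * k - 2) *
            ((1 / 2) *
              ∫ ω, ((∏ t, ∑ m, w m * x t ω m) - (∏ t, ∑ m, wstar m * x t ω m)) ^ 2 ∂μ)) := by
  have hR0 : (0:ℝ) ≤ R := zero_le_one.trans hR
  have key : ∀ x : Fin k → Fin d → ℝ, (∀ t, ∃ j, x t = Pi.single j 1) →
      (∑ j, (((∏ t, ∑ m, w m * x t m) - (∏ t, ∑ m, wstar m * x t m)) *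
          ∑ t, (∏ s ∈ Finset.univ.erase t, ∑ m, w m * x s m) * x t j) ^ 2)
        ≤ (k : ℝ) ^ 2 * R ^ (2 * k - 2) *
            ((∏ t, ∑ m, w m * x t m) - (∏ t, ∑ m, wstar m * x t m)) ^ 2 := by
    intro x hx
    set b : ℝ := (∏ t, ∑ m, w m * x t m) - (∏ t, ∑ m, wstar m * x t m) with hbdef
    set c : Fin k → ℝ := fun t => ∏ s ∈ Finset.univ.erase t, ∑ m, w m * x s m with hcdef
    set v : Fin d → ℝ := fun j => ∑ t, c t * x t j with hvdef
    have ha : ∀ t, |∑ m, w m * x t m| ≤ R := by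
      intro t
      obtain ⟨j, hj⟩ := hx t
      rw [hj]
      simpa [Pi.single_apply, mul_ite] using hw j
    have hxsum : ∀ t, ∑ j, x t j = 1 := by
      intro t; obtain ⟨j, hj⟩ := hx t; rw [hj]; simp [Pi.single_apply]
    have hxnn : ∀ t j, 0 ≤ x t j := by
      intro t j; obtain ⟨i, hi⟩ := hx t; rw [hi, Pi.single_apply]
      split <;> norm_num
    have hc : ∀ t : Fin k, |c t| ≤ R ^ (k - 1) := by
      intro t
      rw [hcdef, Finset.abs_prod]
      calc ∏ s ∈ Finset.univ.erase t, |∑ m, w m * x s m|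
          ≤ ∏ s ∈ Finset.univ.erase t, R :=
            Finset.prod_le_prod (fun _ _ => abs_nonneg _) (fun s _ => ha s)
        _ = R ^ (k - 1) := by
            rw [Finset.prod_const, Finset.card_erase_of_mem (Finset.mem_univ t),
              Finset.card_univ, Fintype.card_fin]
    have h2 : ∑ j, |v j| ≤ (k : ℝ) * R ^ (k - 1) := by
      calc ∑ j, |v j| ≤ ∑ j, ∑ t, |c t| * x t j := by
            refine Finset.sum_le_sum fun j _ => ?_
            refine (Finset.abs_sum_le_sum_abs _ _).trans (le_of_eq ?_)
            exact Finset.sum_congr rfl fun t _ => by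
              rw [abs_mul, abs_of_nonneg (hxnn t j)]
        _ = ∑ t, |c t| * ∑ j, x t j := by
            rw [Finset.sum_comm]; simp [Finset.mul_sum]
        _ = ∑ t, |c t| := by simp [hxsum]
        _ ≤ ∑ _t : Fin k, R ^ (k - 1) := Finset.sum_le_sum fun t _ => hc t
        _ = (k : ℝ) * R ^ (k - 1) := by
            simp [Finset.sum_const, nsmul_eq_mul]
    have h1 : ∑ j, (v j) ^ 2 ≤ ((k : ℝ) * R ^ (k - 1)) ^ 2 := by
      calc ∑ j, (v j) ^ 2 = ∑ j, |v j| ^ 2 := by simp [sq_abs]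
        _ ≤ (∑ j, |v j|) ^ 2 :=
            Finset.sum_sq_le_sq_sum_of_nonneg (fun _ _ => abs_nonneg _)
        _ ≤ ((k : ℝ) * R ^ (k - 1)) ^ 2 := by
            apply pow_le_pow_left₀ (Finset.sum_nonneg fun _ _ => abs_nonneg _) h2
    have hfinal : ((k : ℝ) * R ^ (k - 1)) ^ 2 = (k : ℝ) ^ 2 * R ^ (2 * k - 2) := by
      rw [mul_pow, ← pow_mul]
      congr 2
      omega
    calc ∑ j, (b * v j) ^ 2 = b ^ 2 * ∑ j, (v j) ^ 2 := by
          rw [Finset.mul_sum]; exact Finset.sum_congr rfl fun j _ => by ring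
      _ ≤ b ^ 2 * ((k : ℝ) * R ^ (k - 1)) ^ 2 :=
          mul_le_mul_of_nonneg_left h1 (sq_nonneg _)
      _ = (k : ℝ) ^ 2 * R ^ (2 * k - 2) * b ^ 2 := by rw [hfinal]; ring
  refine ⟨key, ?_⟩
  intro p hp hpsum Ω mΩ μ hμ x hxm hind hxp
  set C : ℝ := (k : ℝ) ^ 2 * R ^ (2 * k - 2) with hCdef
  have hC0 : 0 ≤ C := by positivity
  -- a.e. one-hot
  have hae : ∀ᵐ ω ∂μ, ∀ t, ∃ j, x t ω = Pi.single j 1 := by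
    rw [ae_all_iff]
    intro t
    have hmeas : ∀ j : Fin d, MeasurableSet {ω | x t ω = Pi.single j 1} := by
      intro j
      have h1 : MeasurableSet ({Pi.single j 1} : Set (Fin d → ℝ)) :=
        measurableSet_singleton _
      exact (hxm t) h1
    have hdisj : Pairwise (Function.onFun Disjoint fun j => {ω | x t ω = Pi.single j 1}) := by
      intro i j hij
      refine Set.disjoint_left.2 fun ω hi hj => hij ?_
      have hi' : x t ω = Pi.single i 1 := hi
      have hj' : x t ω = Pi.single j 1 := hj
      have h := congrFun (hi'.symm.trans hj') i
      by_contra hne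
      simp [Pi.single_apply, hne] at h
    have hunion : μ (⋃ j, {ω | x t ω = Pi.single j 1}) = 1 := by
      rw [measure_iUnion hdisj hmeas]
      rw [tsum_fintype]
      simp only [hxp t]
      rw [← ENNReal.ofReal_sum_of_nonneg (fun j _ => hp j), hpsum, ENNReal.ofReal_one]
    have hcompl : μ (⋃ j, {ω | x t ω = Pi.single j 1})ᶜ = 0 := by
      rw [measure_compl (MeasurableSet.iUnion hmeas) (by simp), hunion, measure_univ,
        tsub_self]
    filter_upwards [measure_eq_zero_iff_ae_notMem.1 hcompl] with ω hω
    simpa [Set.mem_iUnion] using hω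
  -- measurability
  have hmeas_a : ∀ (u : Fin d → ℝ) (t : Fin k), Measurable (fun ω => ∑ m, u m * x t ω m) := by
    intro u t
    exact Finset.measurable_sum _ fun m _ =>
      (measurable_const.mul ((measurable_pi_apply m).comp (hxm t)))
  have hmeas_f : Measurable (fun ω =>
      ((∏ t, ∑ m, w m * x t ω m) - (∏ t, ∑ m, wstar m * x t ω m)) ^ 2) := by
    apply Measurable.pow_const
    exact (Finset.measurable_prod _ fun t _ => hmeas_a w t).sub
      (Finset.measurable_prod _ fun t _ => hmeas_a wstar t)
  -- a.e. bound of f by constant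
  have hbound : ∀ᵐ ω ∂μ,
      ‖((∏ t, ∑ m, w m * x t ω m) - (∏ t, ∑ m, wstar m * x t ω m)) ^ 2‖ ≤ (2 * R ^ k) ^ 2 := by
    filter_upwards [hae] with ω hω
    have ha : ∀ t, |∑ m, w m * x t ω m| ≤ R := by
      intro t
      obtain ⟨j, hj⟩ := hω t
      rw [hj]
      simpa [Pi.single_apply, mul_ite] using hw j
    have has : ∀ t, |∑ m, wstar m * x t ω m| ≤ R := by
      intro t
      obtain ⟨j, hj⟩ := hω t
      rw [hj]
      have : |wstar j| = 1 := by rcases hws j with h | h <;> simp [h]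
      simp only [Pi.single_apply, mul_ite, mul_one, mul_zero, Finset.sum_ite_eq',
        Finset.mem_univ, if_true]
      rw [this]; exact hR
    have h1 : |∏ t, ∑ m, w m * x t ω m| ≤ R ^ k := by
      rw [Finset.abs_prod]
      calc ∏ t, |∑ m, w m * x t ω m| ≤ ∏ _t : Fin k, R :=
            Finset.prod_le_prod (fun _ _ => abs_nonneg _) (fun t _ => ha t)
        _ = R ^ k := by simp
    have h2 : |∏ t, ∑ m, wstar m * x t ω m| ≤ R ^ k := by
      rw [Finset.abs_prod]
      calc ∏ t, |∑ m, wstar m * x t ω m| ≤ ∏ _t : Fin k, R :=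
            Finset.prod_le_prod (fun _ _ => abs_nonneg _) (fun t _ => has t)
        _ = R ^ k := by simp
    rw [Real.norm_eq_abs, abs_pow]
    apply pow_le_pow_left₀ (abs_nonneg _)
    calc |(∏ t, ∑ m, w m * x t ω m) - (∏ t, ∑ m, wstar m * x t ω m)|
        ≤ |∏ t, ∑ m, w m * x t ω m| + |∏ t, ∑ m, wstar m * x t ω m| := abs_sub _ _
      _ ≤ R ^ k + R ^ k := add_le_add h1 h2
      _ = 2 * R ^ k := by ring
  have hInt : Integrable (fun ω =>
      ((∏ t, ∑ m, w m * x t ω m) - (∏ t, ∑ m, wstar m * x t ω m)) ^ 2) μ :=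
    Integrable.mono' (integrable_const ((2 * R ^ k) ^ 2))
      hmeas_f.aestronglyMeasurable hbound
  have hmono : (∫ ω, ∑ j, (((∏ t, ∑ m, w m * x t ω m) - (∏ t, ∑ m, wstar m * x t ω m)) *
            ∑ t, (∏ s ∈ Finset.univ.erase t, ∑ m, w m * x s ω m) * x t ω j) ^ 2 ∂μ)
      ≤ ∫ ω, C * ((∏ t, ∑ m, w m * x t ω m) - (∏ t, ∑ m, wstar m * x t ω m)) ^ 2 ∂μ := by
    apply integral_mono_of_nonneg
    · filter_upwards with ω
      exact Finset.sum_nonneg fun j _ => sq_nonneg _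
    · exact hInt.const_mul C
    · filter_upwards [hae] with ω hω
      exact key (fun t => x t ω) hω
  calc (∫ ω, ∑ j, (((∏ t, ∑ m, w m * x t ω m) - (∏ t, ∑ m, wstar m * x t ω m)) *
            ∑ t, (∏ s ∈ Finset.univ.erase t, ∑ m, w m * x s ω m) * x t ω j) ^ 2 ∂μ)
      ≤ ∫ ω, C * ((∏ t, ∑ m, w m * x t ω m) - (∏ t, ∑ m, wstar m * x t ω m)) ^ 2 ∂μ := hmono
    _ = C * ∫ ω, ((∏ t, ∑ m, w m * x t ω m) - (∏ t, ∑ m, wstar m * x t ω m)) ^ 2 ∂μ :=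
        integral_const_mul C _
    _ = 2 * (k : ℝ) ^ 2 * R ^ (2 * k - 2) *
            ((1 / 2) *
              ∫ ω, ((∏ t, ∑ m, w m * x t ω m) - (∏ t, ∑ m, wstar m * x t ω m)) ^ 2 ∂μ) := by
        rw [hCdef]; ring
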